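/- Let d be a positive natural number and let p be a probability measure on ℝ^d (as EuclideanSpace ℝ (Fin d)) with finite second moments, mean m_p = ∫ x dp(x), and covariance matrix Σ_p = ∫ (x − m_p)(x − m_p)ᵀ dp(x), and assume Σ_p is positive definite and klDiv(p, N(m_p, Σ_p)) < ∞. Then for every m ∈ ℝ^d and every positive-definite d×d matrix S, klDiv(p, N(m_p, Σ_p)) ≤ klDiv(p, N(m, S)); that is, among all Gaussian measures, the moment-matched Gaussian minimises the Kullback–Leibler divergence from p. -/

import Mathlib

open MeasureTheory
open scoped ENNReal Classical

/-- Kullback–Leibler divergence of `μ` from `ν`: `∫ log (dμ/dν) dμ` if `μ ≪ ν` (and the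
log-likelihood ratio is integrable), `+∞` otherwise. -/
noncomputable def klDiv {X : Type*} [MeasurableSpace X] (μ ν : Measure X) : ℝ≥0∞ :=
  if μ ≪ ν ∧ Integrable (llr μ ν) μ then ENNReal.ofReal (∫ x, llr μ ν x ∂μ) else ⊤

/-- Density of the multivariate Gaussian with mean `m` and covariance matrix `S` on `ℝ^d`. -/
noncomputable def gaussianPdf {d : ℕ} (m : EuclideanSpace ℝ (Fin d))
    (S : Matrix (Fin d) (Fin d) ℝ) (x : EuclideanSpace ℝ (Fin d)) : ℝ≥0∞ :=
  ENNReal.ofReal ((Real.sqrt ((2 * Real.pi) ^ d * S.det))⁻¹ *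
    Real.exp (-(1 / 2) * dotProduct (x - m) (S⁻¹.mulVec (x - m))))

/-- The multivariate Gaussian probability measure `N(m, S)` on `ℝ^d`, for a mean vector `m`
and a (positive-definite) covariance matrix `S`. -/
noncomputable def gaussianMeasure {d : ℕ} (m : EuclideanSpace ℝ (Fin d))
    (S : Matrix (Fin d) (Fin d) ℝ) : Measure (EuclideanSpace ℝ (Fin d)) :=
  volume.withDensity (gaussianPdf m S)


open scoped Matrix

section MatrixHelpers

lemma hermitian_trace_eq_sum {n : ℕ} {A : Matrix (Fin n) (Fin n) ℝ} (hA : A.IsHermitian) :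
    A.trace = ∑ i, hA.eigenvalues i := by
  simpa using hA.trace_eq_sum_eigenvalues

lemma add_log_det_le_trace {n : ℕ} {A : Matrix (Fin n) (Fin n) ℝ} (hA : A.PosDef) :
    (n : ℝ) + Real.log A.det ≤ A.trace := by
  have hev := hA.eigenvalues_pos
  have hdet : A.det = ∏ i, hA.1.eigenvalues i := by
    simpa using hA.1.det_eq_prod_eigenvalues
  rw [hdet, Real.log_prod (fun i _ => (hev i).ne'), hermitian_trace_eq_sum hA.1]
  have h1 : ∀ i ∈ Finset.univ, (1 : ℝ) + Real.log (hA.1.eigenvalues i) ≤ hA.1.eigenvalues i := by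
    intro i _
    have := Real.log_le_sub_one_of_pos (hev i)
    linarith
  calc (n : ℝ) + ∑ i, Real.log (hA.1.eigenvalues i)
      = ∑ i : Fin n, (1 + Real.log (hA.1.eigenvalues i)) := by
        rw [Finset.sum_add_distrib]; simp
    _ ≤ ∑ i, hA.1.eigenvalues i := Finset.sum_le_sum h1

open scoped MatrixOrder in
lemma key_matrix_ineq {n : ℕ} {Sp S : Matrix (Fin n) (Fin n) ℝ} (hSp : Sp.PosDef)
    (hS : S.PosDef) :
    (n : ℝ) + Real.log Sp.det - Real.log S.det ≤ (S⁻¹ * Sp).trace := by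
  set B := CFC.sqrt Sp with hBdef
  have hB : B.PosSemidef := Matrix.nonneg_iff_posSemidef.mp (CFC.sqrt_nonneg Sp)
  have hBB : B * B = Sp := CFC.sqrt_mul_sqrt_self Sp hSp.posSemidef.nonneg
  have hBdet : B.det ≠ 0 := by
    intro h
    have : Sp.det = 0 := by rw [← hBB, Matrix.det_mul, h, mul_zero]
    exact hSp.det_pos.ne' this
  have hBsymm : Bᵀ = B := hB.1
  have hSinv : (S⁻¹).PosDef := hS.inv
  have hBunit : IsUnit B := (Matrix.isUnit_iff_isUnit_det _).2 hBdet.isUnit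
  have hA : (B * S⁻¹ * B).PosDef := by
    refine Matrix.PosDef.of_dotProduct_mulVec_pos ?_ ?_
    · show (B * S⁻¹ * B)ᴴ = B * S⁻¹ * B
      rw [Matrix.conjTranspose_mul, Matrix.conjTranspose_mul]
      rw [show Bᴴ = B from hB.1, show (S⁻¹)ᴴ = S⁻¹ from hSinv.1, Matrix.mul_assoc]
    · intro x hx
      have hBx : B *ᵥ x ≠ 0 := by
        intro h
        exact hx (Matrix.mulVec_injective_iff_isUnit.mpr hBunit (by simpa using h))
      have hpos := hSinv.dotProduct_mulVec_pos hBx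
      have heq : star x ⬝ᵥ (B * S⁻¹ * B) *ᵥ x = star (B *ᵥ x) ⬝ᵥ S⁻¹ *ᵥ (B *ᵥ x) := by
        rw [star_trivial, star_trivial, ← Matrix.mulVec_mulVec, ← Matrix.mulVec_mulVec,
          Matrix.dotProduct_mulVec x B]
        congr 1
        conv_lhs => rw [← hBsymm]
        rw [Matrix.vecMul_transpose]
      rw [heq]; exact hpos
  have htrace : (B * S⁻¹ * B).trace = (S⁻¹ * Sp).trace := by
    rw [Matrix.trace_mul_cycle, hBB, Matrix.trace_mul_comm]
  have hBBdet : B.det * B.det = Sp.det := by rw [← Matrix.det_mul, hBB]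
  have hdetA : (B * S⁻¹ * B).det = Sp.det * S.det⁻¹ := by
    rw [Matrix.det_mul, Matrix.det_mul, Matrix.det_nonsing_inv, Ring.inverse_eq_inv']
    rw [← hBBdet]; ring
  have hlog : Real.log ((B * S⁻¹ * B).det) = Real.log Sp.det - Real.log S.det := by
    rw [hdetA, Real.log_mul hSp.det_pos.ne' (inv_ne_zero hS.det_pos.ne'), Real.log_inv]
    ring
  have hfinal := add_log_det_le_trace hA
  rw [hlog, htrace] at hfinal
  linarith

end MatrixHelpers

section GaussHelpers

variable {d : ℕ}

lemma continuous_quadform (m : EuclideanSpace ℝ (Fin d)) (M : Matrix (Fin d) (Fin d) ℝ) :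
    Continuous fun x : EuclideanSpace ℝ (Fin d) =>
      dotProduct (x - m) (M.mulVec (x - m)) := by
  have hc : ∀ i, Continuous fun x : EuclideanSpace ℝ (Fin d) => x i := fun i =>
    (EuclideanSpace.proj (𝕜 := ℝ) i : EuclideanSpace ℝ (Fin d) →L[ℝ] ℝ).continuous
  have hsub : ∀ i, Continuous fun x : EuclideanSpace ℝ (Fin d) => (x - m) i := fun i =>
    (hc i).comp (continuous_id.sub continuous_const)
  simp only [dotProduct, Matrix.mulVec]
  exact continuous_finset_sum _ fun i _ =>
    (hsub i).mul (continuous_finset_sum _ fun j _ => continuous_const.mul (hsub j))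

lemma measurable_gaussianPdf (m : EuclideanSpace ℝ (Fin d)) (S : Matrix (Fin d) (Fin d) ℝ) :
    Measurable (gaussianPdf m S) := by
  apply ENNReal.measurable_ofReal.comp
  exact (Continuous.measurable (continuous_const.mul
    (Real.continuous_exp.comp (continuous_const.mul (continuous_quadform m S⁻¹)))))

lemma sqrtdet_pos {S : Matrix (Fin d) (Fin d) ℝ} (hS : S.PosDef) :
    0 < Real.sqrt ((2 * Real.pi) ^ d * S.det) :=
  Real.sqrt_pos.2 (mul_pos (pow_pos (by positivity) d) hS.det_pos)

lemma gaussianPdf_toReal {m : EuclideanSpace ℝ (Fin d)} {S : Matrix (Fin d) (Fin d) ℝ}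
    (hS : S.PosDef) (x : EuclideanSpace ℝ (Fin d)) :
    (gaussianPdf m S x).toReal = (Real.sqrt ((2 * Real.pi) ^ d * S.det))⁻¹ *
      Real.exp (-(1 / 2) * dotProduct (x - m) (S⁻¹.mulVec (x - m))) := by
  rw [gaussianPdf]
  exact ENNReal.toReal_ofReal
    (mul_nonneg (inv_nonneg.2 (sqrtdet_pos hS).le) (Real.exp_pos _).le)

lemma gaussianPdf_pos {m : EuclideanSpace ℝ (Fin d)} {S : Matrix (Fin d) (Fin d) ℝ}
    (hS : S.PosDef) (x : EuclideanSpace ℝ (Fin d)) : 0 < gaussianPdf m S x := by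
  rw [gaussianPdf, ENNReal.ofReal_pos]
  exact mul_pos (inv_pos.2 (sqrtdet_pos hS)) (Real.exp_pos _)

lemma quadform_nonneg {S : Matrix (Fin d) (Fin d) ℝ} (hS : S.PosDef)
    (m x : EuclideanSpace ℝ (Fin d)) :
    0 ≤ dotProduct (x - m) (S⁻¹.mulVec (x - m)) := by
  have := hS.inv.posSemidef.dotProduct_mulVec_nonneg (fun i => (x - m) i)
  simpa only [star_trivial, WithLp.ofLp_sub] using this

lemma sigmaFinite_gaussianMeasure (m : EuclideanSpace ℝ (Fin d))
    (S : Matrix (Fin d) (Fin d) ℝ) (hS : S.PosDef) :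
    SigmaFinite (gaussianMeasure m S) := by
  have hb : ∀ x, gaussianPdf m S x
      ≤ ENNReal.ofReal ((Real.sqrt ((2 * Real.pi) ^ d * S.det))⁻¹) := by
    intro x
    rw [gaussianPdf]
    apply ENNReal.ofReal_le_ofReal
    have hq := quadform_nonneg hS m x
    have hexp : Real.exp (-(1 / 2) * dotProduct (x - m) (S⁻¹.mulVec (x - m))) ≤ 1 :=
      Real.exp_le_one_iff.2 (by nlinarith)
    have h0 : (0:ℝ) ≤ (Real.sqrt ((2 * Real.pi) ^ d * S.det))⁻¹ :=
      inv_nonneg.2 (sqrtdet_pos hS).le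
    calc (Real.sqrt ((2 * Real.pi) ^ d * S.det))⁻¹ *
          Real.exp (-(1 / 2) * dotProduct (x - m) (S⁻¹.mulVec (x - m)))
        ≤ (Real.sqrt ((2 * Real.pi) ^ d * S.det))⁻¹ * 1 := by
          exact mul_le_mul_of_nonneg_left hexp h0
      _ = _ := mul_one _
  have hle : gaussianMeasure m S
      ≤ ((Real.sqrt ((2 * Real.pi) ^ d * S.det))⁻¹).toNNReal • volume := by
    rw [gaussianMeasure]
    calc volume.withDensity (gaussianPdf m S)
        ≤ volume.withDensity
            (fun _ => ENNReal.ofReal ((Real.sqrt ((2 * Real.pi) ^ d * S.det))⁻¹)) :=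
          withDensity_mono (Filter.Eventually.of_forall hb)
      _ = _ := by rw [withDensity_const]; rfl
  exact Measure.sigmaFinite_of_le _ hle

end GaussHelpers

/-- Moment matching minimises the KL divergence to Gaussians: if `p` has finite second
moments, mean `mp`, positive-definite covariance `Sp` and finite divergence from the
moment-matched Gaussian, then `D(p ‖ N(mp, Sp)) ≤ D(p ‖ N(m, S))` for every mean `m` and
positive-definite covariance `S`. -/
theorem momentMatched_gaussian_minimizes_klDiv {d : ℕ} (hd : 0 < d)
    (p : Measure (EuclideanSpace ℝ (Fin d))) [IsProbabilityMeasure p]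
    (hmom : Integrable (fun x => ‖x‖ ^ 2) p)
    (mp : EuclideanSpace ℝ (Fin d)) (hmp : mp = ∫ x, x ∂p)
    (Sp : Matrix (Fin d) (Fin d) ℝ)
    (hSp : ∀ i j, Sp i j = ∫ x, (x i - mp i) * (x j - mp j) ∂p)
    (hSpd : Sp.PosDef) (hfin : klDiv p (gaussianMeasure mp Sp) < ⊤) :
    ∀ (m : EuclideanSpace ℝ (Fin d)) (S : Matrix (Fin d) (Fin d) ℝ), S.PosDef →
      klDiv p (gaussianMeasure mp Sp) ≤ klDiv p (gaussianMeasure m S) := by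
  intro m S hS
  classical
  haveI hsf1 : SigmaFinite (gaussianMeasure mp Sp) := sigmaFinite_gaussianMeasure _ _ hSpd
  haveI hsf2 : SigmaFinite (gaussianMeasure m S) := sigmaFinite_gaussianMeasure _ _ hS
  by_cases h2 : p ≪ gaussianMeasure m S ∧ Integrable (llr p (gaussianMeasure m S)) p
  swap
  · conv_rhs => rw [klDiv]
    rw [if_neg h2]; exact le_top
  have h1 : p ≪ gaussianMeasure mp Sp ∧ Integrable (llr p (gaussianMeasure mp Sp)) p := by
    by_contra hcon
    rw [klDiv, if_neg hcon] at hfin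
    exact absurd hfin (lt_irrefl _)
  rw [klDiv, klDiv, if_pos h1, if_pos h2]
  apply ENNReal.ofReal_le_ofReal
  -- coordinate continuity
  have hc : ∀ i, Continuous fun x : EuclideanSpace ℝ (Fin d) => x i := fun i =>
    (EuclideanSpace.proj (𝕜 := ℝ) i : EuclideanSpace ℝ (Fin d) →L[ℝ] ℝ).continuous
  have habs : ∀ (x : EuclideanSpace ℝ (Fin d)) i, |x i| ≤ ‖x‖ := by
    intro x i
    rw [EuclideanSpace.norm_eq, show |x i| = Real.sqrt ((x i) ^ 2) from
      (Real.sqrt_sq_eq_abs _).symm]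
    apply Real.sqrt_le_sqrt
    calc (x i) ^ 2 = ‖x i‖ ^ 2 := by rw [Real.norm_eq_abs, sq_abs]
      _ ≤ ∑ j, ‖x j‖ ^ 2 := Finset.single_le_sum (f := fun j => ‖x j‖ ^ 2) (fun j _ => by positivity) (Finset.mem_univ i)
  -- integrability of coordinates and products
  have hid : Integrable (fun x : EuclideanSpace ℝ (Fin d) => x) p := by
    refine Integrable.mono' ((integrable_const (1:ℝ)).add hmom) aestronglyMeasurable_id
      (Filter.Eventually.of_forall fun x => ?_)
    simp only [Pi.add_apply]
    nlinarith [sq_nonneg (‖x‖ - 1), norm_nonneg x]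
  have hcoord : ∀ i, Integrable (fun x : EuclideanSpace ℝ (Fin d) => x i) p := by
    intro i
    refine Integrable.mono' ((integrable_const (1:ℝ)).add hmom) (hc i).aestronglyMeasurable
      (Filter.Eventually.of_forall fun x => ?_)
    simp only [Pi.add_apply]
    rw [Real.norm_eq_abs]
    nlinarith [habs x i, sq_nonneg (‖x‖ - 1), norm_nonneg x, abs_nonneg (x i)]
  have hmul : ∀ i j, Integrable (fun x : EuclideanSpace ℝ (Fin d) => x i * x j) p := by
    intro i j
    refine Integrable.mono' hmom ((hc i).mul (hc j)).aestronglyMeasurable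
      (Filter.Eventually.of_forall fun x => ?_)
    rw [norm_mul, Real.norm_eq_abs, Real.norm_eq_abs]
    nlinarith [habs x i, habs x j, abs_nonneg (x i), abs_nonneg (x j), norm_nonneg x]
  have hprod : ∀ (i j : Fin d) (a b : ℝ),
      Integrable (fun x : EuclideanSpace ℝ (Fin d) => (x i - a) * (x j - b)) p := by
    intro i j a b
    have hfun : (fun x : EuclideanSpace ℝ (Fin d) => (x i - a) * (x j - b))
        = fun x => x i * x j + (-b) * x i + (-a) * x j + a * b := by
      funext x; ring
    rw [hfun]
    exact (((hmul i j).add ((hcoord i).const_mul _)).add ((hcoord j).const_mul _)).add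
      (integrable_const _)
  -- first moments
  have hmean : ∀ i, ∫ x, x i ∂p = mp i := by
    intro i
    have h := (EuclideanSpace.proj (𝕜 := ℝ) i :
      EuclideanSpace ℝ (Fin d) →L[ℝ] ℝ).integral_comp_comm hid
    rw [hmp]
    simpa using h
  have hcen : ∀ i, ∫ x, (x i - mp i) ∂p = 0 := by
    intro i
    rw [integral_sub (hcoord i) (integrable_const _), hmean i, integral_const]
    simp
  -- second moments
  have hcov : ∀ (i j : Fin d) (a b : ℝ),
      ∫ x, (x i - a) * (x j - b) ∂p = Sp i j + (mp i - a) * (mp j - b) := by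
    intro i j a b
    have hexp : ∀ x : EuclideanSpace ℝ (Fin d), (x i - a) * (x j - b)
        = (x i - mp i) * (x j - mp j) + (mp j - b) * (x i - mp i)
          + (mp i - a) * (x j - mp j) + (mp i - a) * (mp j - b) := by
      intro x; ring
    have hint1 : Integrable (fun x : EuclideanSpace ℝ (Fin d) =>
        (x i - mp i) * (x j - mp j)) p := hprod i j (mp i) (mp j)
    have hint2 : Integrable (fun x : EuclideanSpace ℝ (Fin d) =>
        (mp j - b) * (x i - mp i)) p := ((hcoord i).sub (integrable_const _)).const_mul _
    have hint3 : Integrable (fun x : EuclideanSpace ℝ (Fin d) =>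
        (mp i - a) * (x j - mp j)) p := ((hcoord j).sub (integrable_const _)).const_mul _
    have hint12 : Integrable (fun x : EuclideanSpace ℝ (Fin d) =>
        (x i - mp i) * (x j - mp j) + (mp j - b) * (x i - mp i)) p := hint1.add hint2
    have hint123 : Integrable (fun x : EuclideanSpace ℝ (Fin d) =>
        (x i - mp i) * (x j - mp j) + (mp j - b) * (x i - mp i)
          + (mp i - a) * (x j - mp j)) p := hint12.add hint3
    calc ∫ x, (x i - a) * (x j - b) ∂p
        = ∫ x, ((x i - mp i) * (x j - mp j) + (mp j - b) * (x i - mp i)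
            + (mp i - a) * (x j - mp j) + (mp i - a) * (mp j - b)) ∂p := by
          exact integral_congr_ae (Filter.Eventually.of_forall fun x => hexp x)
      _ = Sp i j + (mp i - a) * (mp j - b) := by
          rw [integral_add hint123 (integrable_const _),
            integral_add hint12 hint3,
            integral_add hint1 hint2,
            integral_const_mul, integral_const_mul, hcen i, hcen j, ← hSp i j,
            integral_const]
          simp
  have hsymm : ∀ i j, Sp j i = Sp i j := by
    intro i j
    rw [hSp, hSp]
    exact integral_congr_ae (Filter.Eventually.of_forall fun x => mul_comm _ _)
  have htrace_sum : ∀ M : Matrix (Fin d) (Fin d) ℝ,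
      ∑ i, ∑ j, M i j * Sp i j = (M * Sp).trace := by
    intro M
    rw [Matrix.trace]
    simp only [Matrix.diag, Matrix.mul_apply]
    exact Finset.sum_congr rfl fun i _ => Finset.sum_congr rfl fun j _ => by rw [hsymm]
  -- quadratic form rewriting and integrals
  have hQrw : ∀ (M : Matrix (Fin d) (Fin d) ℝ) (c x : EuclideanSpace ℝ (Fin d)),
      dotProduct (x - c) (M.mulVec (x - c))
        = ∑ i, ∑ j, M i j * ((x i - c i) * (x j - c j)) := by
    intro M c x
    simp only [dotProduct, Matrix.mulVec, Finset.mul_sum]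
    refine Finset.sum_congr rfl fun i _ => Finset.sum_congr rfl fun j _ => ?_
    have h1 : (x - c) i = x i - c i := rfl
    have h2 : (x.ofLp - c.ofLp) j = x j - c j := rfl
    rw [h1, h2]; ring
  have hQint : ∀ (M : Matrix (Fin d) (Fin d) ℝ) (c : EuclideanSpace ℝ (Fin d)),
      Integrable (fun x : EuclideanSpace ℝ (Fin d) =>
        dotProduct (x - c) (M.mulVec (x - c))) p := by
    intro M c
    have : (fun x : EuclideanSpace ℝ (Fin d) => dotProduct (x - c) (M.mulVec (x - c)))
        = fun x => ∑ i, ∑ j, M i j * ((x i - c i) * (x j - c j)) := by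
      funext x; exact hQrw M c x
    rw [this]
    exact integrable_finset_sum _ fun i _ => integrable_finset_sum _ fun j _ =>
      (hprod i j (c i) (c j)).const_mul _
  have hQval : ∀ (M : Matrix (Fin d) (Fin d) ℝ) (c : EuclideanSpace ℝ (Fin d)),
      ∫ x, dotProduct (x - c) (M.mulVec (x - c)) ∂p
        = ∑ i, ∑ j, M i j * (Sp i j + (mp i - c i) * (mp j - c j)) := by
    intro M c
    calc ∫ x, dotProduct (x - c) (M.mulVec (x - c)) ∂p
        = ∫ x, ∑ i, ∑ j, M i j * ((x i - c i) * (x j - c j)) ∂p :=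
          integral_congr_ae (Filter.Eventually.of_forall fun x => hQrw M c x)
      _ = ∑ i, ∑ j, M i j * (Sp i j + (mp i - c i) * (mp j - c j)) := by
          rw [integral_finset_sum _ (f := fun i (x : EuclideanSpace ℝ (Fin d)) => ∑ j, M i j * ((x i - c i) * (x j - c j))) (fun i _ => integrable_finset_sum _ fun j _ =>
            (hprod i j (c i) (c j)).const_mul _)]
          refine Finset.sum_congr rfl fun i _ => ?_
          rw [integral_finset_sum _ (f := fun j (x : EuclideanSpace ℝ (Fin d)) => M i j * ((x i - c i) * (x j - c j))) (fun j _ => (hprod i j (c i) (c j)).const_mul _)]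
          refine Finset.sum_congr rfl fun j _ => ?_
          rw [integral_const_mul, hcov i j (c i) (c j)]
  have hQ1val : ∫ x, dotProduct (x - mp) (Sp⁻¹.mulVec (x - mp)) ∂p = (d : ℝ) := by
    rw [hQval]
    have : ∑ i, ∑ j, Sp⁻¹ i j * (Sp i j + (mp i - mp i) * (mp j - mp j))
        = ∑ i, ∑ j, Sp⁻¹ i j * Sp i j := by
      refine Finset.sum_congr rfl fun i _ => Finset.sum_congr rfl fun j _ => by ring
    rw [this, htrace_sum, Matrix.nonsing_inv_mul Sp hSpd.det_pos.ne'.isUnit,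
      Matrix.trace_one]
    simp
  have hq0 : (0:ℝ) ≤ dotProduct (fun i => mp i - m i)
      (S⁻¹.mulVec (fun i => mp i - m i)) := by
    by_cases hv : (fun i => mp i - m i) = (0 : Fin d → ℝ)
    · rw [hv]; simp
    · have := hS.inv.dotProduct_mulVec_pos hv
      simpa using this.le
  have hQ2val : ∫ x, dotProduct (x - m) (S⁻¹.mulVec (x - m)) ∂p
      = (S⁻¹ * Sp).trace + dotProduct (fun i => mp i - m i)
        (S⁻¹.mulVec (fun i => mp i - m i)) := by
    rw [hQval]
    have hsplit : ∑ i, ∑ j, S⁻¹ i j * (Sp i j + (mp i - m i) * (mp j - m j))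
        = (∑ i, ∑ j, S⁻¹ i j * Sp i j)
          + ∑ i, ∑ j, S⁻¹ i j * ((mp i - m i) * (mp j - m j)) := by
      rw [← Finset.sum_add_distrib]
      refine Finset.sum_congr rfl fun i _ => ?_
      rw [← Finset.sum_add_distrib]
      exact Finset.sum_congr rfl fun j _ => by ring
    rw [hsplit, htrace_sum]
    congr 1
    simp only [dotProduct, Matrix.mulVec, Finset.mul_sum]
    exact Finset.sum_congr rfl fun i _ => Finset.sum_congr rfl fun j _ => by ring
  -- the correction function g
  set C1 : ℝ := Real.sqrt ((2 * Real.pi) ^ d * Sp.det) with hC1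
  set C2 : ℝ := Real.sqrt ((2 * Real.pi) ^ d * S.det) with hC2
  have hgi2 : Integrable (fun x : EuclideanSpace ℝ (Fin d) =>
      (1/2) * dotProduct (x - m) (S⁻¹.mulVec (x - m))) p := (hQint S⁻¹ m).const_mul _
  have hgi1 : Integrable (fun x : EuclideanSpace ℝ (Fin d) =>
      (1/2) * dotProduct (x - mp) (Sp⁻¹.mulVec (x - mp))) p :=
    (hQint Sp⁻¹ mp).const_mul _
  have hgisub : Integrable (fun x : EuclideanSpace ℝ (Fin d) =>
      (1/2) * dotProduct (x - m) (S⁻¹.mulVec (x - m))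
        - (1/2) * dotProduct (x - mp) (Sp⁻¹.mulVec (x - mp))) p := hgi2.sub hgi1
  have hgint : Integrable (fun x : EuclideanSpace ℝ (Fin d) =>
      (1/2) * dotProduct (x - m) (S⁻¹.mulVec (x - m))
        - (1/2) * dotProduct (x - mp) (Sp⁻¹.mulVec (x - mp))
        + (Real.log C2 - Real.log C1)) p := hgisub.add (integrable_const _)
  have hlogC : Real.log C2 - Real.log C1 = (1/2) * (Real.log S.det - Real.log Sp.det) := by
    rw [hC1, hC2, Real.log_sqrt (mul_nonneg (by positivity) hS.det_pos.le),
      Real.log_sqrt (mul_nonneg (by positivity) hSpd.det_pos.le),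
      Real.log_mul (by positivity) hS.det_pos.ne',
      Real.log_mul (by positivity) hSpd.det_pos.ne']
    ring
  have hgval : 0 ≤ ∫ x, ((1/2) * dotProduct (x - m) (S⁻¹.mulVec (x - m))
      - (1/2) * dotProduct (x - mp) (Sp⁻¹.mulVec (x - mp))
      + (Real.log C2 - Real.log C1)) ∂p := by
    have hval : ∫ x, ((1/2) * dotProduct (x - m) (S⁻¹.mulVec (x - m))
        - (1/2) * dotProduct (x - mp) (Sp⁻¹.mulVec (x - mp))
        + (Real.log C2 - Real.log C1)) ∂p
        = (1/2) * ((S⁻¹ * Sp).trace + dotProduct (fun i => mp i - m i)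
            (S⁻¹.mulVec (fun i => mp i - m i)))
          - (1/2) * (d : ℝ) + (Real.log C2 - Real.log C1) := by
      rw [integral_add hgisub (integrable_const _), integral_sub hgi2 hgi1,
        integral_const_mul, integral_const_mul, hQ1val, hQ2val, integral_const]
      simp
    rw [hval, hlogC]
    have hkey := key_matrix_ineq hSpd hS
    linarith
  -- a.e. decomposition of the log-likelihood ratios
  have hac1 := h1.1
  have hac2 := h2.1
  have hpv : p ≪ (volume : Measure (EuclideanSpace ℝ (Fin d))) :=
    hac1.trans (withDensity_absolutelyContinuous _ _)
  have hm1 : (gaussianMeasure mp Sp).rnDeriv volume =ᵐ[volume] gaussianPdf mp Sp :=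
    Measure.rnDeriv_withDensity volume (measurable_gaussianPdf mp Sp)
  have hm2 : (gaussianMeasure m S).rnDeriv volume =ᵐ[volume] gaussianPdf m S :=
    Measure.rnDeriv_withDensity volume (measurable_gaussianPdf m S)
  have hch1 := Measure.rnDeriv_mul_rnDeriv (κ := volume) hac1
  have hch2 := Measure.rnDeriv_mul_rnDeriv (κ := volume) hac2
  have hae : llr p (gaussianMeasure m S)
      =ᵐ[p] fun x => llr p (gaussianMeasure mp Sp) x
        + ((1/2) * dotProduct (x - m) (S⁻¹.mulVec (x - m))
          - (1/2) * dotProduct (x - mp) (Sp⁻¹.mulVec (x - mp))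
          + (Real.log C2 - Real.log C1)) := by
    filter_upwards [hpv.ae_le hch1, hpv.ae_le hch2, hpv.ae_le hm1, hpv.ae_le hm2,
      Measure.rnDeriv_pos hac1, Measure.rnDeriv_pos hac2,
      hac1.ae_le (Measure.rnDeriv_lt_top p (gaussianMeasure mp Sp)),
      hac2.ae_le (Measure.rnDeriv_lt_top p (gaussianMeasure m S))]
      with x hx1 hx2 hf1 hf2 hp1 hp2 ht1 ht2
    have hkey : (p.rnDeriv (gaussianMeasure m S) x) * gaussianPdf m S x
        = (p.rnDeriv (gaussianMeasure mp Sp) x) * gaussianPdf mp Sp x := by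
      have e1 : p.rnDeriv (gaussianMeasure mp Sp) x * gaussianPdf mp Sp x
          = p.rnDeriv volume x := by
        rw [← hf1]; exact hx1
      have e2 : p.rnDeriv (gaussianMeasure m S) x * gaussianPdf m S x
          = p.rnDeriv volume x := by
        rw [← hf2]; exact hx2
      rw [e1, e2]
    have hb : 0 < (p.rnDeriv (gaussianMeasure m S) x).toReal :=
      ENNReal.toReal_pos hp2.ne' ht2.ne
    have ha : 0 < (p.rnDeriv (gaussianMeasure mp Sp) x).toReal :=
      ENNReal.toReal_pos hp1.ne' ht1.ne
    have hc1pos : 0 < (gaussianPdf mp Sp x).toReal :=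
      ENNReal.toReal_pos (gaussianPdf_pos hSpd x).ne' ENNReal.ofReal_ne_top
    have hc2pos : 0 < (gaussianPdf m S x).toReal :=
      ENNReal.toReal_pos (gaussianPdf_pos hS x).ne' ENNReal.ofReal_ne_top
    have hreal : (p.rnDeriv (gaussianMeasure m S) x).toReal * (gaussianPdf m S x).toReal
        = (p.rnDeriv (gaussianMeasure mp Sp) x).toReal * (gaussianPdf mp Sp x).toReal := by
      rw [← ENNReal.toReal_mul, ← ENNReal.toReal_mul, hkey]
    have hlog1 : Real.log ((gaussianPdf mp Sp x).toReal)
        = -Real.log C1 + (-(1/2) * dotProduct (x - mp) (Sp⁻¹.mulVec (x - mp))) := by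
      rw [gaussianPdf_toReal hSpd,
        Real.log_mul (inv_ne_zero (sqrtdet_pos hSpd).ne') (Real.exp_ne_zero _),
        Real.log_inv, Real.log_exp, hC1]
    have hlog2 : Real.log ((gaussianPdf m S x).toReal)
        = -Real.log C2 + (-(1/2) * dotProduct (x - m) (S⁻¹.mulVec (x - m))) := by
      rw [gaussianPdf_toReal hS,
        Real.log_mul (inv_ne_zero (sqrtdet_pos hS).ne') (Real.exp_ne_zero _),
        Real.log_inv, Real.log_exp, hC2]
    have hlogeq := congrArg Real.log hreal
    rw [Real.log_mul hb.ne' hc2pos.ne', Real.log_mul ha.ne' hc1pos.ne'] at hlogeq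
    show Real.log ((p.rnDeriv (gaussianMeasure m S) x).toReal)
      = Real.log ((p.rnDeriv (gaussianMeasure mp Sp) x).toReal)
        + ((1/2) * dotProduct (x - m) (S⁻¹.mulVec (x - m))
          - (1/2) * dotProduct (x - mp) (Sp⁻¹.mulVec (x - mp))
          + (Real.log C2 - Real.log C1))
    rw [hlog1, hlog2] at hlogeq
    have h12 : llr p (gaussianMeasure mp Sp) x
        = Real.log ((p.rnDeriv (gaussianMeasure mp Sp) x).toReal) := rfl
    linarith
  -- conclude
  have hintsum : Integrable (fun x => llr p (gaussianMeasure mp Sp) x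
      + ((1/2) * dotProduct (x - m) (S⁻¹.mulVec (x - m))
        - (1/2) * dotProduct (x - mp) (Sp⁻¹.mulVec (x - mp))
        + (Real.log C2 - Real.log C1))) p := h1.2.add hgint
  calc ∫ x, llr p (gaussianMeasure mp Sp) x ∂p
      ≤ ∫ x, llr p (gaussianMeasure mp Sp) x ∂p
        + ∫ x, ((1/2) * dotProduct (x - m) (S⁻¹.mulVec (x - m))
          - (1/2) * dotProduct (x - mp) (Sp⁻¹.mulVec (x - mp))
          + (Real.log C2 - Real.log C1)) ∂p := by linarith
    _ = ∫ x, (llr p (gaussianMeasure mp Sp) x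
          + ((1/2) * dotProduct (x - m) (S⁻¹.mulVec (x - m))
            - (1/2) * dotProduct (x - mp) (Sp⁻¹.mulVec (x - mp))
            + (Real.log C2 - Real.log C1))) ∂p := (integral_add h1.2 hgint).symm
    _ = ∫ x, llr p (gaussianMeasure m S) x ∂p := (integral_congr_ae hae).symm
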